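/- Let Γ be a full-rank lattice, ν > 0, χ a unimodular pseudo-character, and define the complex Hermite-Taylor coefficients a_{m,n} = Σ_{γ∈Γ} χ(γ) e^{−(ν/2)|γ|²} H^ν_{m,n}(γ, γ̄). Then the reproducing kernel K(z,w) = (ν/π) Σ_{γ∈Γ} χ(γ) e^{−(ν/2)|γ|² + ν(z γ̄ − w̄ γ + z w̄)} admits the absolutely convergent power series expansion K(z,w) = (ν/π) Σ_{m,n=0}^∞ (−1)^m a_{m,n} z^n w̄^m / (m! n!). -/

import Mathlib

open Complex

/-- The weighted complex Hermite polynomial `H^ν_{m,n}(ξ, ξ̄)`. -/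
noncomputable def hermiteC (ν : ℝ) (m n : ℕ) (ξ : ℂ) : ℂ :=
  (m.factorial : ℂ) * (n.factorial : ℂ) * (ν : ℂ) ^ (m + n) *
    ∑ k ∈ Finset.range (min m n + 1),
      (-1 : ℂ) ^ k * ξ ^ (m - k) * (starRingEnd ℂ ξ) ^ (n - k) /
        ((ν : ℂ) ^ k * (k.factorial : ℂ) * ((m - k).factorial : ℂ) * ((n - k).factorial : ℂ))

/-- The lattice point `m ω₁ + n ω₂` of the lattice `Γ = ℤω₁ + ℤω₂`. -/
noncomputable def latPt (ω₁ ω₂ : ℂ) (p : ℤ × ℤ) : ℂ := (p.1 : ℂ) * ω₁ + (p.2 : ℂ) * ω₂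

/-- The `(Γ,χ)`-automorphic reproducing kernel function
`K(z,w) = (ν/π) Σ_{γ∈Γ} χ(γ) e^{−(ν/2)|γ|² + ν(z γ̄ − w̄ γ + z w̄)}`. -/
noncomputable def autoKer (ν : ℝ) (ω₁ ω₂ : ℂ) (χ : ℂ → ℂ) (z w : ℂ) : ℂ :=
  ((ν / Real.pi : ℝ) : ℂ) *
    ∑' γ : ℤ × ℤ,
      χ (latPt ω₁ ω₂ γ) *
        Complex.exp (-(ν : ℂ) / 2 * (‖latPt ω₁ ω₂ γ‖ : ℂ) ^ 2 +
          (ν : ℂ) * (z * starRingEnd ℂ (latPt ω₁ ω₂ γ) - starRingEnd ℂ w * latPt ω₁ ω₂ γ +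
            z * starRingEnd ℂ w))

/-- The complex Hermite-Taylor coefficient `a_{m,n} = Σ_{γ∈Γ} χ(γ) e^{−(ν/2)|γ|²} H^ν_{m,n}(γ, γ̄)`. -/
noncomputable def aCoeff (ν : ℝ) (ω₁ ω₂ : ℂ) (χ : ℂ → ℂ) (m n : ℕ) : ℂ :=
  ∑' γ : ℤ × ℤ,
    χ (latPt ω₁ ω₂ γ) * Complex.exp (-(ν : ℂ) / 2 * (‖latPt ω₁ ω₂ γ‖ : ℂ) ^ 2) *
      hermiteC ν m n (latPt ω₁ ω₂ γ)

/-! ### Auxiliary lemmas -/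

private lemma exp_tsum_div_c (x : ℂ) : Complex.exp x = ∑' j : ℕ, x ^ j / (j.factorial : ℂ) := by
  rw [Complex.exp_eq_exp_ℂ, NormedSpace.exp_eq_tsum_div]

private lemma exp_tsum_div_r (x : ℝ) : Real.exp x = ∑' j : ℕ, x ^ j / (j.factorial : ℝ) := by
  rw [Real.exp_eq_exp_ℝ, NormedSpace.exp_eq_tsum_div]

private lemma expSummableNormC (x : ℂ) :
    Summable fun j : ℕ => ‖x ^ j / (j.factorial : ℂ)‖ := by
  refine (Real.summable_pow_div_factorial ‖x‖).congr fun j => ?_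
  rw [norm_div, norm_pow, Complex.norm_natCast]

private lemma expSummableNormR (r : ℝ) :
    Summable fun j : ℕ => ‖r ^ j / (j.factorial : ℝ)‖ := by
  refine (Real.summable_pow_div_factorial |r|).congr fun j => ?_
  rw [Real.norm_eq_abs, _root_.abs_div, _root_.abs_pow, Nat.abs_cast]

private lemma tripleSummableR (r s t : ℝ) :
    Summable fun p : ℕ × ℕ × ℕ =>
      r ^ p.1 / (p.1.factorial : ℝ) * (s ^ p.2.1 / (p.2.1.factorial : ℝ) *
        (t ^ p.2.2 / (p.2.2.factorial : ℝ))) :=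
  summable_mul_of_summable_norm (f := fun j : ℕ => r ^ j / (j.factorial : ℝ))
    (g := fun q : ℕ × ℕ => s ^ q.1 / (q.1.factorial : ℝ) * (t ^ q.2 / (q.2.factorial : ℝ)))
    (expSummableNormR r)
    (Summable.mul_norm (f := fun j : ℕ => s ^ j / (j.factorial : ℝ))
      (g := fun j : ℕ => t ^ j / (j.factorial : ℝ))
      (expSummableNormR s) (expSummableNormR t))

private lemma tripleTsumR (r s t : ℝ) :
    ∑' p : ℕ × ℕ × ℕ, r ^ p.1 / (p.1.factorial : ℝ) * (s ^ p.2.1 / (p.2.1.factorial : ℝ) *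
        (t ^ p.2.2 / (p.2.2.factorial : ℝ)))
      = Real.exp r * (Real.exp s * Real.exp t) := by
  rw [exp_tsum_div_r, exp_tsum_div_r, exp_tsum_div_r,
    tsum_mul_tsum_of_summable_norm (expSummableNormR s) (expSummableNormR t),
    tsum_mul_tsum_of_summable_norm (expSummableNormR r)
      ((expSummableNormR s).mul_norm (expSummableNormR t))]

private lemma tripleTsumC (x y u : ℂ) :
    ∑' p : ℕ × ℕ × ℕ, x ^ p.1 / (p.1.factorial : ℂ) * (y ^ p.2.1 / (p.2.1.factorial : ℂ) *
        (u ^ p.2.2 / (p.2.2.factorial : ℂ)))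
      = Complex.exp x * (Complex.exp y * Complex.exp u) := by
  rw [exp_tsum_div_c, exp_tsum_div_c, exp_tsum_div_c,
    tsum_mul_tsum_of_summable_norm (expSummableNormC y) (expSummableNormC u),
    tsum_mul_tsum_of_summable_norm (expSummableNormC x)
      ((expSummableNormC y).mul_norm (expSummableNormC u))]

private def trEquiv : (Σ mn : ℕ × ℕ, Fin (min mn.1 mn.2 + 1)) ≃ ℕ × ℕ × ℕ where
  toFun σ := (σ.1.1 - σ.2.1, σ.1.2 - σ.2.1, σ.2.1)
  invFun p := ⟨(p.1 + p.2.2, p.2.1 + p.2.2), ⟨p.2.2, by omega⟩⟩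
  left_inv := by
    rintro ⟨⟨m, n⟩, ⟨k, hk⟩⟩
    refine Sigma.ext ?_ ?_
    · simp only [Prod.mk.injEq]
      omega
    · rw [Fin.heq_ext_iff (by simp only; omega)]
  right_inv := by
    rintro ⟨j, l, k⟩
    simp

private lemma frac_helper (A B C P Q R d1 d2 d3 Dq Dr : ℂ)
    (hd1 : d1 ≠ 0) (hd2 : d2 ≠ 0) (hd3 : d3 ≠ 0) (hDq : Dq ≠ 0) (hDr : Dr ≠ 0)
    (key : A * B * C * (Dq * Dr) = P * Q * R * (d1 * (d2 * d3))) :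
    A / d1 * (B / d2 * (C / d3)) = P * (Q / Dq) * (R / Dr) := by
  field_simp
  linear_combination key

private lemma groupSum (ν : ℝ) (hν : (ν : ℂ) ≠ 0) (a b ξ : ℂ) (m n : ℕ) :
    ∑ k ∈ Finset.range (min m n + 1),
        ((ν : ℂ) * a * ξ) ^ (m - k) / ((m - k).factorial : ℂ) *
          (((ν : ℂ) * b * starRingEnd ℂ ξ) ^ (n - k) / ((n - k).factorial : ℂ) *
            ((-((ν : ℂ) * a * b)) ^ k / (k.factorial : ℂ)))
      = hermiteC ν m n ξ * (a ^ m * b ^ n / ((m.factorial : ℂ) * (n.factorial : ℂ))) := by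
  rw [hermiteC, Finset.mul_sum, Finset.sum_mul]
  refine Finset.sum_congr rfl fun k hk => ?_
  have hkm : k ≤ m := by have := Finset.mem_range.mp hk; omega
  have hkn : k ≤ n := by have := Finset.mem_range.mp hk; omega
  have ha : a ^ m = a ^ (m - k) * a ^ k := by rw [← pow_add]; congr 1; omega
  have hb : b ^ n = b ^ (n - k) * b ^ k := by rw [← pow_add]; congr 1; omega
  have hνp : (ν : ℂ) ^ (m + n) =
      (ν : ℂ) ^ (m - k) * (ν : ℂ) ^ (n - k) * ((ν : ℂ) ^ k * (ν : ℂ) ^ k) := by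
    rw [← pow_add, ← pow_add, ← pow_add]; congr 1; omega
  have h1 : ((m - k).factorial : ℂ) ≠ 0 := Nat.cast_ne_zero.mpr (Nat.factorial_ne_zero _)
  have h2 : ((n - k).factorial : ℂ) ≠ 0 := Nat.cast_ne_zero.mpr (Nat.factorial_ne_zero _)
  have h3 : (k.factorial : ℂ) ≠ 0 := Nat.cast_ne_zero.mpr (Nat.factorial_ne_zero _)
  have h4 : (m.factorial : ℂ) ≠ 0 := Nat.cast_ne_zero.mpr (Nat.factorial_ne_zero _)
  have h5 : (n.factorial : ℂ) ≠ 0 := Nat.cast_ne_zero.mpr (Nat.factorial_ne_zero _)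
  have h6 : (ν : ℂ) ^ k ≠ 0 := pow_ne_zero _ hν
  have hu : (-((ν : ℂ) * a * b)) ^ k = (-1 : ℂ) ^ k * ((ν : ℂ) ^ k * (a ^ k * b ^ k)) := by
    rw [neg_pow, mul_pow, mul_pow]; ring
  rw [ha, hb, hνp, hu]
  exact frac_helper _ _ _ _ _ _ _ _ _ _ _ h1 h2 h3
    (mul_ne_zero (mul_ne_zero (mul_ne_zero h6 h3) h1) h2) (mul_ne_zero h4 h5) (by ring)

private lemma four_exp_bound (ν c : ℝ) (hν : 0 ≤ ν) (hc : 0 ≤ c) (ξ : ℂ) :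
    Real.exp (ν * c * ‖ξ‖) ≤
      Real.exp (ν * ((((c : ℂ) + c * I)) * starRingEnd ℂ ξ).re) +
        Real.exp (ν * ((((c : ℂ) - c * I)) * starRingEnd ℂ ξ).re) +
        Real.exp (ν * (((-(c : ℂ) + c * I)) * starRingEnd ℂ ξ).re) +
        Real.exp (ν * (((-(c : ℂ) - c * I)) * starRingEnd ℂ ξ).re) := by
  have h1 : ((((c : ℂ) + c * I)) * starRingEnd ℂ ξ).re = c * ξ.re + c * ξ.im := by
    simp [Complex.mul_re, Complex.add_re, Complex.add_im, Complex.mul_im]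
  have h2 : ((((c : ℂ) - c * I)) * starRingEnd ℂ ξ).re = c * ξ.re - c * ξ.im := by
    simp [Complex.mul_re, Complex.sub_re, Complex.sub_im, Complex.mul_im]
  have h3 : (((-(c : ℂ) + c * I)) * starRingEnd ℂ ξ).re = -(c * ξ.re) + c * ξ.im := by
    simp [Complex.mul_re, Complex.add_re, Complex.add_im, Complex.mul_im]
  have h4 : (((-(c : ℂ) - c * I)) * starRingEnd ℂ ξ).re = -(c * ξ.re) - c * ξ.im := by
    simp [Complex.mul_re, Complex.sub_re, Complex.sub_im, Complex.mul_im]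
  rw [h1, h2, h3, h4]
  have habs : ‖ξ‖ ≤ |ξ.re| + |ξ.im| := Complex.norm_le_abs_re_add_abs_im ξ
  have hkey : ν * c * ‖ξ‖ ≤ ν * (c * |ξ.re|) + ν * (c * |ξ.im|) := by
    have := mul_le_mul_of_nonneg_left habs (mul_nonneg hν hc)
    nlinarith
  refine le_trans (Real.exp_le_exp.mpr hkey) ?_
  rcases le_or_gt 0 ξ.re with hx | hx <;> rcases le_or_gt 0 ξ.im with hy | hy
  · rw [_root_.abs_of_nonneg hx, _root_.abs_of_nonneg hy]
    have e1 := Real.exp_pos (ν * (c * ξ.re - c * ξ.im))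
    have e2 := Real.exp_pos (ν * (-(c * ξ.re) + c * ξ.im))
    have e3 := Real.exp_pos (ν * (-(c * ξ.re) - c * ξ.im))
    have : ν * (c * ξ.re) + ν * (c * ξ.im) = ν * (c * ξ.re + c * ξ.im) := by ring
    rw [this]; linarith
  · rw [_root_.abs_of_nonneg hx, _root_.abs_of_neg hy]
    have e1 := Real.exp_pos (ν * (c * ξ.re + c * ξ.im))
    have e2 := Real.exp_pos (ν * (-(c * ξ.re) + c * ξ.im))
    have e3 := Real.exp_pos (ν * (-(c * ξ.re) - c * ξ.im))
    have : ν * (c * ξ.re) + ν * (c * -ξ.im) = ν * (c * ξ.re - c * ξ.im) := by ring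
    rw [this]; linarith
  · rw [_root_.abs_of_neg hx, _root_.abs_of_nonneg hy]
    have e1 := Real.exp_pos (ν * (c * ξ.re + c * ξ.im))
    have e2 := Real.exp_pos (ν * (c * ξ.re - c * ξ.im))
    have e3 := Real.exp_pos (ν * (-(c * ξ.re) - c * ξ.im))
    have : ν * (c * -ξ.re) + ν * (c * ξ.im) = ν * (-(c * ξ.re) + c * ξ.im) := by ring
    rw [this]; linarith
  · rw [_root_.abs_of_neg hx, _root_.abs_of_neg hy]
    have e1 := Real.exp_pos (ν * (c * ξ.re + c * ξ.im))
    have e2 := Real.exp_pos (ν * (c * ξ.re - c * ξ.im))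
    have e3 := Real.exp_pos (ν * (-(c * ξ.re) + c * ξ.im))
    have : ν * (c * -ξ.re) + ν * (c * -ξ.im) = ν * (-(c * ξ.re) - c * ξ.im) := by ring
    rw [this]; linarith

private lemma exp_prod_le (ν cab t0 na nb g A B C D : ℝ)
    (hb : Real.exp (ν * (na + nb) * g) ≤ A + B + C + D) :
    Real.exp t0 * (Real.exp (ν * na * g) * (Real.exp (ν * nb * g) * Real.exp cab)) ≤
      Real.exp cab * (Real.exp t0 * A + Real.exp t0 * B + Real.exp t0 * C + Real.exp t0 * D) := by
  have h1 : Real.exp t0 * (Real.exp (ν * na * g) * (Real.exp (ν * nb * g) * Real.exp cab)) =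
      (Real.exp cab * Real.exp t0) * Real.exp (ν * (na + nb) * g) := by
    rw [← Real.exp_add, ← Real.exp_add, ← Real.exp_add, ← Real.exp_add, ← Real.exp_add]
    congr 1; ring
  rw [h1]
  calc (Real.exp cab * Real.exp t0) * Real.exp (ν * (na + nb) * g)
      ≤ (Real.exp cab * Real.exp t0) * (A + B + C + D) := by
        apply mul_le_mul_of_nonneg_left hb (by positivity)
    _ = Real.exp cab * (Real.exp t0 * A + Real.exp t0 * B + Real.exp t0 * C + Real.exp t0 * D) :=
        by ring


private noncomputable def Fker (ν : ℝ) (ω₁ ω₂ : ℂ) (χ : ℂ → ℂ) (z w : ℂ)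
    (q : (ℤ × ℤ) × (ℕ × ℕ × ℕ)) : ℂ :=
  χ (latPt ω₁ ω₂ q.1) * Complex.exp (-(ν : ℂ) / 2 * (‖latPt ω₁ ω₂ q.1‖ : ℂ) ^ 2) *
    (((ν : ℂ) * -(starRingEnd ℂ w) * latPt ω₁ ω₂ q.1) ^ q.2.1 / (q.2.1.factorial : ℂ) *
      (((ν : ℂ) * z * starRingEnd ℂ (latPt ω₁ ω₂ q.1)) ^ q.2.2.1 / (q.2.2.1.factorial : ℂ) *
        ((-((ν : ℂ) * -(starRingEnd ℂ w) * z)) ^ q.2.2.2 / (q.2.2.2.factorial : ℂ))))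

set_option maxHeartbeats 4000000 in
theorem autoKer_power_series_expansion (ν : ℝ) (hν : 0 < ν) (ω₁ ω₂ : ℂ)
    (hrank : (ω₁ * starRingEnd ℂ ω₂).im ≠ 0) (χ : ℂ → ℂ)
    (hχuni : ∀ p : ℤ × ℤ, ‖χ (latPt ω₁ ω₂ p)‖ = 1)
    (hχpseudo : ∀ p q : ℤ × ℤ,
      χ (latPt ω₁ ω₂ p + latPt ω₁ ω₂ q) =
        χ (latPt ω₁ ω₂ p) * χ (latPt ω₁ ω₂ q) *
          Complex.exp (((ν : ℂ) / 2) *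
            (latPt ω₁ ω₂ p * starRingEnd ℂ (latPt ω₁ ω₂ q) -
              starRingEnd ℂ (latPt ω₁ ω₂ p) * latPt ω₁ ω₂ q)))
    (hsum : ∀ z w : ℂ, Summable fun γ : ℤ × ℤ =>
      χ (latPt ω₁ ω₂ γ) *
        Complex.exp (-(ν : ℂ) / 2 * (‖latPt ω₁ ω₂ γ‖ : ℂ) ^ 2 +
          (ν : ℂ) * (z * starRingEnd ℂ (latPt ω₁ ω₂ γ) - starRingEnd ℂ w * latPt ω₁ ω₂ γ +
            z * starRingEnd ℂ w)))
    (hasum : ∀ m n : ℕ, Summable fun γ : ℤ × ℤ =>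
      χ (latPt ω₁ ω₂ γ) * Complex.exp (-(ν : ℂ) / 2 * (‖latPt ω₁ ω₂ γ‖ : ℂ) ^ 2) *
        hermiteC ν m n (latPt ω₁ ω₂ γ)) :
    ∀ z w : ℂ,
      Summable (fun mn : ℕ × ℕ =>
        (-1 : ℂ) ^ mn.1 * aCoeff ν ω₁ ω₂ χ mn.1 mn.2 * z ^ mn.2 * (starRingEnd ℂ w) ^ mn.1 /
          ((mn.1.factorial : ℂ) * (mn.2.factorial : ℂ))) ∧
      autoKer ν ω₁ ω₂ χ z w =
        ((ν / Real.pi : ℝ) : ℂ) *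
          ∑' mn : ℕ × ℕ,
            (-1 : ℂ) ^ mn.1 * aCoeff ν ω₁ ω₂ χ mn.1 mn.2 * z ^ mn.2 * (starRingEnd ℂ w) ^ mn.1 /
              ((mn.1.factorial : ℂ) * (mn.2.factorial : ℂ)) := by
  intro z w
  have hν0 : (ν : ℂ) ≠ 0 := Complex.ofReal_ne_zero.mpr (ne_of_gt hν)
  have hre : ∀ t : ℝ, (-(ν : ℂ) / 2 * ((t : ℝ) : ℂ) ^ 2).re = -ν / 2 * t ^ 2 := by
    intro t
    have h : -(ν : ℂ) / 2 * ((t : ℝ) : ℂ) ^ 2 = ((-ν / 2 * t ^ 2 : ℝ) : ℂ) := by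
      push_cast; ring
    rw [h, Complex.ofReal_re]
  have hcnorm : ∀ γ : ℤ × ℤ,
      ‖χ (latPt ω₁ ω₂ γ) * Complex.exp (-(ν : ℂ) / 2 * (‖latPt ω₁ ω₂ γ‖ : ℂ) ^ 2)‖
        = Real.exp (-ν / 2 * ‖latPt ω₁ ω₂ γ‖ ^ 2) := by
    intro γ
    rw [norm_mul, hχuni, one_mul, Complex.norm_exp, hre]
  have hQ : ∀ y : ℂ, Summable fun γ : ℤ × ℤ =>
      Real.exp (-ν / 2 * ‖latPt ω₁ ω₂ γ‖ ^ 2 +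
        ν * (y * starRingEnd ℂ (latPt ω₁ ω₂ γ)).re) := by
    intro y
    have h0 := summable_norm_iff.mpr (hsum y 0)
    refine h0.congr fun γ => ?_
    rw [norm_mul, hχuni, one_mul, Complex.norm_exp]
    congr 1
    rw [map_zero, zero_mul, sub_zero, mul_zero, add_zero, Complex.add_re, hre,
      Complex.re_ofReal_mul]
  have hnx : ∀ γ : ℤ × ℤ, ‖(ν : ℂ) * -(starRingEnd ℂ w) * latPt ω₁ ω₂ γ‖
      = ν * ‖-(starRingEnd ℂ w)‖ * ‖latPt ω₁ ω₂ γ‖ := by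
    intro γ
    rw [norm_mul, norm_mul, Complex.norm_real, Real.norm_eq_abs, _root_.abs_of_pos hν]
  have hny : ∀ γ : ℤ × ℤ, ‖(ν : ℂ) * z * starRingEnd ℂ (latPt ω₁ ω₂ γ)‖
      = ν * ‖z‖ * ‖latPt ω₁ ω₂ γ‖ := by
    intro γ
    rw [norm_mul, norm_mul, Complex.norm_real, Real.norm_eq_abs, _root_.abs_of_pos hν,
      Complex.norm_conj]
  have hnu : ‖-((ν : ℂ) * -(starRingEnd ℂ w) * z)‖ = ν * ‖-(starRingEnd ℂ w)‖ * ‖z‖ := by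
    rw [norm_neg, norm_mul, norm_mul, Complex.norm_real, Real.norm_eq_abs, _root_.abs_of_pos hν]
  -- norm identity for Fker
  have hFG : ∀ q : (ℤ × ℤ) × (ℕ × ℕ × ℕ), ‖Fker ν ω₁ ω₂ χ z w q‖ =
      Real.exp (-ν / 2 * ‖latPt ω₁ ω₂ q.1‖ ^ 2) *
        (‖(ν : ℂ) * -(starRingEnd ℂ w) * latPt ω₁ ω₂ q.1‖ ^ q.2.1 / (q.2.1.factorial : ℝ) *
          (‖(ν : ℂ) * z * starRingEnd ℂ (latPt ω₁ ω₂ q.1)‖ ^ q.2.2.1 / (q.2.2.1.factorial : ℝ) *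
            (‖-((ν : ℂ) * -(starRingEnd ℂ w) * z)‖ ^ q.2.2.2 / (q.2.2.2.factorial : ℝ)))) := by
    intro q
    simp only [Fker]
    rw [norm_mul, hcnorm, norm_mul, norm_mul, norm_div, norm_pow, Complex.norm_natCast,
      norm_div, norm_pow, Complex.norm_natCast, norm_div, norm_pow, Complex.norm_natCast]
  have hFnorm : Summable fun q => ‖Fker ν ω₁ ω₂ χ z w q‖ := by
    have hGs : Summable fun q : (ℤ × ℤ) × (ℕ × ℕ × ℕ) =>
        Real.exp (-ν / 2 * ‖latPt ω₁ ω₂ q.1‖ ^ 2) *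
          (‖(ν : ℂ) * -(starRingEnd ℂ w) * latPt ω₁ ω₂ q.1‖ ^ q.2.1 / (q.2.1.factorial : ℝ) *
            (‖(ν : ℂ) * z * starRingEnd ℂ (latPt ω₁ ω₂ q.1)‖ ^ q.2.2.1 / (q.2.2.1.factorial : ℝ) *
              (‖-((ν : ℂ) * -(starRingEnd ℂ w) * z)‖ ^ q.2.2.2 / (q.2.2.2.factorial : ℝ)))) := by
      refine (summable_prod_of_nonneg ?_).2 ⟨fun γ => ?_, ?_⟩
      · intro q
        simp only [Pi.zero_apply]
        positivity
      · exact (Summable.mul_left (Real.exp (-ν / 2 * ‖latPt ω₁ ω₂ γ‖ ^ 2))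
          (tripleSummableR ‖(ν : ℂ) * -(starRingEnd ℂ w) * latPt ω₁ ω₂ γ‖
            ‖(ν : ℂ) * z * starRingEnd ℂ (latPt ω₁ ω₂ γ)‖
            ‖-((ν : ℂ) * -(starRingEnd ℂ w) * z)‖)).congr fun p => rfl
      · have hval : ∀ γ : ℤ × ℤ, (∑' p : ℕ × ℕ × ℕ,
            Real.exp (-ν / 2 * ‖latPt ω₁ ω₂ γ‖ ^ 2) *
              (‖(ν : ℂ) * -(starRingEnd ℂ w) * latPt ω₁ ω₂ γ‖ ^ p.1 / (p.1.factorial : ℝ) *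
                (‖(ν : ℂ) * z * starRingEnd ℂ (latPt ω₁ ω₂ γ)‖ ^ p.2.1 / (p.2.1.factorial : ℝ) *
                  (‖-((ν : ℂ) * -(starRingEnd ℂ w) * z)‖ ^ p.2.2 / (p.2.2.factorial : ℝ)))))
            = Real.exp (-ν / 2 * ‖latPt ω₁ ω₂ γ‖ ^ 2) *
              (Real.exp (ν * ‖-(starRingEnd ℂ w)‖ * ‖latPt ω₁ ω₂ γ‖) *
                (Real.exp (ν * ‖z‖ * ‖latPt ω₁ ω₂ γ‖) *
                  Real.exp (ν * ‖-(starRingEnd ℂ w)‖ * ‖z‖))) := by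
          intro γ
          rw [tsum_mul_left, tripleTsumR, hnx γ, hny γ, hnu]
        refine Summable.of_nonneg_of_le
          (fun γ => tsum_nonneg fun p => by positivity) (fun γ => ?_)
          (Summable.mul_left (Real.exp (ν * ‖-(starRingEnd ℂ w)‖ * ‖z‖))
            ((((hQ ((((‖-(starRingEnd ℂ w)‖ + ‖z‖ : ℝ) : ℂ)) +
                  ((‖-(starRingEnd ℂ w)‖ + ‖z‖ : ℝ) : ℂ) * I)).add
              (hQ ((((‖-(starRingEnd ℂ w)‖ + ‖z‖ : ℝ) : ℂ)) -
                  ((‖-(starRingEnd ℂ w)‖ + ‖z‖ : ℝ) : ℂ) * I))).add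
              (hQ ((-((‖-(starRingEnd ℂ w)‖ + ‖z‖ : ℝ) : ℂ)) +
                  ((‖-(starRingEnd ℂ w)‖ + ‖z‖ : ℝ) : ℂ) * I))).add
              (hQ ((-((‖-(starRingEnd ℂ w)‖ + ‖z‖ : ℝ) : ℂ)) -
                  ((‖-(starRingEnd ℂ w)‖ + ‖z‖ : ℝ) : ℂ) * I))))
        rw [hval γ]
        have hb := exp_prod_le ν (ν * ‖-(starRingEnd ℂ w)‖ * ‖z‖)
          (-ν / 2 * ‖latPt ω₁ ω₂ γ‖ ^ 2) ‖-(starRingEnd ℂ w)‖ ‖z‖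
          (‖latPt ω₁ ω₂ γ‖) _ _ _ _
          (four_exp_bound ν (‖-(starRingEnd ℂ w)‖ + ‖z‖) hν.le (by positivity)
            (latPt ω₁ ω₂ γ))
        simpa only [← Real.exp_add] using hb
    exact hGs.congr fun q => (hFG q).symm
  have hF : Summable (Fker ν ω₁ ω₂ χ z w) := hFnorm.of_norm
  -- kernel-side evaluation of the fiber sums over p
  have hker : ∀ γ : ℤ × ℤ, (∑' p : ℕ × ℕ × ℕ, Fker ν ω₁ ω₂ χ z w (γ, p))
      = χ (latPt ω₁ ω₂ γ) *
          Complex.exp (-(ν : ℂ) / 2 * (‖latPt ω₁ ω₂ γ‖ : ℂ) ^ 2 +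
            (ν : ℂ) * (z * starRingEnd ℂ (latPt ω₁ ω₂ γ) - starRingEnd ℂ w * latPt ω₁ ω₂ γ +
              z * starRingEnd ℂ w)) := by
    intro γ
    simp only [Fker]
    rw [tsum_mul_left, tripleTsumC, ← Complex.exp_add, ← Complex.exp_add, mul_assoc,
      ← Complex.exp_add]
    congr 1
    congr 1
    ring
  have hswap : ∑' q : (ℤ × ℤ) × (ℕ × ℕ × ℕ), Fker ν ω₁ ω₂ χ z w q
      = ∑' p : ℕ × ℕ × ℕ, ∑' γ : ℤ × ℤ, Fker ν ω₁ ω₂ χ z w (γ, p) := by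
    rw [← (Equiv.prodComm (ℕ × ℕ × ℕ) (ℤ × ℤ)).tsum_eq (Fker ν ω₁ ω₂ χ z w)]
    simp only [Equiv.coe_prodComm]
    rw [Summable.tsum_prod' hF.prod_symm fun p => hF.prod_symm.prod_factor p]
    exact tsum_congr fun p => tsum_congr fun γ => rfl
  have hT : Summable fun p : ℕ × ℕ × ℕ => ∑' γ : ℤ × ℤ, Fker ν ω₁ ω₂ χ z w (γ, p) := by
    exact (HasSum.prod_fiberwise hF.prod_symm.hasSum
      fun p => (hF.prod_symm.prod_factor p).hasSum).summable
  have hkey : ∀ m n : ℕ,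
      (∑' k : Fin (min m n + 1), ∑' γ : ℤ × ℤ, Fker ν ω₁ ω₂ χ z w (γ, trEquiv ⟨(m, n), k⟩))
        = (-1 : ℂ) ^ m * aCoeff ν ω₁ ω₂ χ m n * z ^ n * (starRingEnd ℂ w) ^ m /
            ((m.factorial : ℂ) * (n.factorial : ℂ)) := by
    intro m n
    rw [tsum_fintype]
    calc ∑ k : Fin (min m n + 1), ∑' γ : ℤ × ℤ, Fker ν ω₁ ω₂ χ z w (γ, trEquiv ⟨(m, n), k⟩)
        = ∑ k ∈ Finset.range (min m n + 1),
            ∑' γ : ℤ × ℤ, Fker ν ω₁ ω₂ χ z w (γ, (m - k, n - k, k)) := by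
          rw [← Fin.sum_univ_eq_sum_range
            (fun k => ∑' γ : ℤ × ℤ, Fker ν ω₁ ω₂ χ z w (γ, (m - k, n - k, k)))]
          exact Finset.sum_congr rfl fun k _ => rfl
      _ = ∑' γ : ℤ × ℤ, ∑ k ∈ Finset.range (min m n + 1),
            Fker ν ω₁ ω₂ χ z w (γ, (m - k, n - k, k)) :=
          (Summable.tsum_finsetSum fun k _ => hF.prod_symm.prod_factor (m - k, n - k, k)).symm
      _ = ∑' γ : ℤ × ℤ, (χ (latPt ω₁ ω₂ γ) *
              Complex.exp (-(ν : ℂ) / 2 * (‖latPt ω₁ ω₂ γ‖ : ℂ) ^ 2) *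
              hermiteC ν m n (latPt ω₁ ω₂ γ)) *
            ((-(starRingEnd ℂ w)) ^ m * z ^ n /
              ((m.factorial : ℂ) * (n.factorial : ℂ))) := by
          refine tsum_congr fun γ => ?_
          simp only [Fker]
          rw [← Finset.mul_sum, groupSum ν hν0 (-(starRingEnd ℂ w)) z (latPt ω₁ ω₂ γ) m n]
          ring
      _ = (∑' γ : ℤ × ℤ, χ (latPt ω₁ ω₂ γ) *
              Complex.exp (-(ν : ℂ) / 2 * (‖latPt ω₁ ω₂ γ‖ : ℂ) ^ 2) *
              hermiteC ν m n (latPt ω₁ ω₂ γ)) *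
            ((-(starRingEnd ℂ w)) ^ m * z ^ n /
              ((m.factorial : ℂ) * (n.factorial : ℂ))) := tsum_mul_right
      _ = (-1 : ℂ) ^ m * aCoeff ν ω₁ ω₂ χ m n * z ^ n * (starRingEnd ℂ w) ^ m /
            ((m.factorial : ℂ) * (n.factorial : ℂ)) := by
          simp only [aCoeff]
          rw [neg_pow]
          ring
  have hSig : Summable fun σ : Σ mn : ℕ × ℕ, Fin (min mn.1 mn.2 + 1) =>
      ∑' γ : ℤ × ℤ, Fker ν ω₁ ω₂ χ z w (γ, trEquiv σ) :=
    (Equiv.summable_iff trEquiv).mpr hT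
  constructor
  · refine (hSig.sigma' fun mn => (hasSum_fintype _).summable).congr fun mn => ?_
    obtain ⟨m, n⟩ := mn
    exact hkey m n
  · rw [autoKer]
    congr 1
    calc ∑' γ : ℤ × ℤ, χ (latPt ω₁ ω₂ γ) *
            Complex.exp (-(ν : ℂ) / 2 * (‖latPt ω₁ ω₂ γ‖ : ℂ) ^ 2 +
              (ν : ℂ) * (z * starRingEnd ℂ (latPt ω₁ ω₂ γ) - starRingEnd ℂ w * latPt ω₁ ω₂ γ +
                z * starRingEnd ℂ w))
        = ∑' γ : ℤ × ℤ, ∑' p : ℕ × ℕ × ℕ, Fker ν ω₁ ω₂ χ z w (γ, p) :=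
          tsum_congr fun γ => (hker γ).symm
      _ = ∑' q : (ℤ × ℤ) × (ℕ × ℕ × ℕ), Fker ν ω₁ ω₂ χ z w q :=
          (Summable.tsum_prod' hF fun γ => hF.prod_factor γ).symm
      _ = ∑' p : ℕ × ℕ × ℕ, ∑' γ : ℤ × ℤ, Fker ν ω₁ ω₂ χ z w (γ, p) := hswap
      _ = ∑' σ : Σ mn : ℕ × ℕ, Fin (min mn.1 mn.2 + 1),
            ∑' γ : ℤ × ℤ, Fker ν ω₁ ω₂ χ z w (γ, trEquiv σ) :=
          (trEquiv.tsum_eq fun p => ∑' γ : ℤ × ℤ, Fker ν ω₁ ω₂ χ z w (γ, p)).symm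
      _ = ∑' mn : ℕ × ℕ, ∑' k : Fin (min mn.1 mn.2 + 1),
            ∑' γ : ℤ × ℤ, Fker ν ω₁ ω₂ χ z w (γ, trEquiv ⟨mn, k⟩) :=
          Summable.tsum_sigma' (fun mn => (hasSum_fintype _).summable) hSig
      _ = ∑' mn : ℕ × ℕ,
            (-1 : ℂ) ^ mn.1 * aCoeff ν ω₁ ω₂ χ mn.1 mn.2 * z ^ mn.2 *
              (starRingEnd ℂ w) ^ mn.1 /
              ((mn.1.factorial : ℂ) * (mn.2.factorial : ℂ)) := by
          refine tsum_congr fun mn => ?_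
          obtain ⟨m, n⟩ := mn
          exact hkey m n
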